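/- Let L be a closed subspace of E = ℓ²(X), and X₀, X₀' disjoint finite subsets of X. Say L is (X₀,X₀')-regular if L ∩ E_{X₀'} = {0} and L^⊥ ∩ E_{X₀} = {0}. If L is (X₀,X₀')-regular and X₀' = X₁' ⊔ X₂', then the projected subspace L_{∅,X₁'} := (L + E_{X₁'}) ∩ E_{X∖X₁'} is (X₀, X₂')-regular as a subspace of E_{X∖X₁'}. -/

import Mathlib

noncomputable section

open scoped InnerProductSpace

variable {X : Type*} [DecidableEq X]

/-- The canonical basis vector `e_x` of `ℓ²(X)`. -/
def basisVec (x : X) : lp (fun _ : X => ℂ) 2 := lp.single 2 x 1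

/-- `E_A`: the closed linear span of the basis vectors indexed by `A`. -/
def spanE (A : Set X) : Submodule ℂ (lp (fun _ : X => ℂ) 2) :=
  (Submodule.span ℂ (basisVec '' A)).topologicalClosure

/-- The `(X₀,X₀')`-reduction `L_{X₀,X₀'} = (L + E_{X₀'}) ∩ E_{X∖(X₀⊔X₀')}` of `L`. -/
def reduction (L : Submodule ℂ (lp (fun _ : X => ℂ) 2)) (X₀ X₀' : Set X) :
    Submodule ℂ (lp (fun _ : X => ℂ) 2) :=
  (L ⊔ spanE X₀') ⊓ spanE (X₀ ∪ X₀')ᶜ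

/-- evaluation as a continuous linear map -/
def evalCLM (x : X) : lp (fun _ : X => ℂ) 2 →L[ℂ] ℂ :=
  LinearMap.mkContinuous
    { toFun := fun f => f x
      map_add' := fun f g => by simp
      map_smul' := fun c f => by simp }
    1 (fun f => by
      simp only [LinearMap.coe_mk, AddHom.coe_mk, one_mul]
      exact lp.norm_apply_le_norm (by norm_num) f x)

lemma spanE_apply_eq_zero {A : Set X} {f : lp (fun _ : X => ℂ) 2} (hf : f ∈ spanE A)
    {x : X} (hx : x ∉ A) : f x = 0 := by
  have h1 : spanE A ≤ LinearMap.ker (evalCLM x : lp (fun _ : X => ℂ) 2 →ₗ[ℂ] ℂ) := by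
    apply Submodule.topologicalClosure_minimal
    · rw [Submodule.span_le]
      rintro _ ⟨y, hy, rfl⟩
      have : y ≠ x := fun h => hx (h ▸ hy)
      simp [LinearMap.mem_ker, evalCLM, basisVec, lp.single_apply, this.symm]
      exact lp.single_apply_ne 2 y _ this.symm
    · exact ContinuousLinearMap.isClosed_ker (evalCLM x)
  exact h1 hf

lemma single_mem_spanE {A : Set X} {x : X} (hx : x ∈ A) (c : ℂ) :
    lp.single 2 x c ∈ spanE A := by
  have : lp.single 2 x c = c • basisVec x := by
    rw [basisVec, ← lp.single_smul]
    norm_num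
  rw [this]
  exact Submodule.smul_mem _ _ (Submodule.le_topologicalClosure _
    (Submodule.subset_span ⟨x, hx, rfl⟩))

lemma mem_spanE_of_support {A : Set X} {f : lp (fun _ : X => ℂ) 2}
    (hf : ∀ x, x ∉ A → f x = 0) : f ∈ spanE A := by
  have hs : HasSum (fun x : X => lp.single 2 x (f x)) f :=
    lp.hasSum_single (by norm_num) f
  have hcl : IsClosed ((spanE A : Set (lp (fun _ : X => ℂ) 2))) := by
    exact Submodule.isClosed_topologicalClosure _
  refine hcl.mem_of_tendsto hs (Filter.Eventually.of_forall ?_)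
  intro s
  refine Submodule.sum_mem _ (fun x _ => ?_)
  by_cases hx : x ∈ A
  · exact single_mem_spanE hx _
  · rw [hf x hx]
    have h0 : lp.single (E := fun _ : X => ℂ) 2 x (0:ℂ) = 0 := by
      apply lp.ext
      funext j
      by_cases hj : j = x <;> simp [lp.single_apply, hj]
    rw [h0]
    exact Submodule.zero_mem _

lemma spanE_mono {A B : Set X} (h : A ⊆ B) : spanE A ≤ spanE B :=
  Submodule.topologicalClosure_mono (Submodule.span_mono (Set.image_mono h))

lemma inner_eq_zero_of_disjoint_support {f g : lp (fun _ : X => ℂ) 2}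
    (h : ∀ x, f x = 0 ∨ g x = 0) : ⟪f, g⟫_ℂ = 0 := by
  rw [lp.inner_eq_tsum]
  convert tsum_zero with x
  rcases h x with h | h <;> simp [h]

/-- If `L` is `(X₀,X₀')`-regular and `X₀' = X₁' ⊔ X₂'`, then the projected subspace
`L_{∅,X₁'}` is `(X₀,X₂')`-regular as a subspace of `E_{X∖X₁'}` (orthogonal complements
of the reduced subspace being taken within `E_{X∖X₁'}`). -/
theorem stmt9 (L : Submodule ℂ (lp (fun _ : X => ℂ) 2))
    (hL : IsClosed (L : Set (lp (fun _ : X => ℂ) 2)))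
    (X₀ X₀' X₁' X₂' : Set X) (hfin₀ : X₀.Finite) (hfin₀' : X₀'.Finite)
    (hdisj : Disjoint X₀ X₀') (hpart : X₀' = X₁' ∪ X₂') (hdisj' : Disjoint X₁' X₂')
    (hreg₁ : L ⊓ spanE X₀' = ⊥) (hreg₂ : Lᗮ ⊓ spanE X₀ = ⊥) :
    reduction L ∅ X₁' ⊓ spanE X₂' = ⊥ ∧
    ((reduction L ∅ X₁')ᗮ ⊓ spanE X₁'ᶜ) ⊓ spanE X₀ = ⊥ := by
  have h1sub : X₁' ⊆ X₀' := hpart ▸ Set.subset_union_left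
  have h2sub : X₂' ⊆ X₀' := hpart ▸ Set.subset_union_right
  have hred : reduction L ∅ X₁' = (L ⊔ spanE X₁') ⊓ spanE X₁'ᶜ := by
    rw [reduction, Set.empty_union]
  constructor
  · rw [eq_bot_iff]
    rintro v ⟨hv1, hv2⟩
    rw [hred] at hv1
    obtain ⟨hvsup, hvc⟩ := hv1
    obtain ⟨l, hl, w, hw, rfl⟩ := Submodule.mem_sup.mp hvsup
    have hl0 : l = 0 := by
      have hlm : l ∈ L ⊓ spanE X₀' := by
        refine ⟨hl, ?_⟩
        have : l = (l + w) - w := by abel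
        rw [this]
        exact Submodule.sub_mem _ (spanE_mono h2sub hv2) (spanE_mono h1sub hw)
      rw [hreg₁] at hlm
      exact hlm
    subst hl0
    rw [Submodule.mem_bot]
    apply lp.ext
    funext x
    by_cases hx : x ∈ X₁'
    · exact spanE_apply_eq_zero hvc (by simpa using hx)
    · simpa using spanE_apply_eq_zero hw hx
  · rw [eq_bot_iff]
    rintro v ⟨⟨hv1, _⟩, hv0⟩
    have hvL : v ∈ Lᗮ := by
      rw [Submodule.mem_orthogonal]
      intro l hl
      have hfin₁ : X₁'.Finite := hfin₀'.subset h1sub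
      set s : Finset X := hfin₁.toFinset with hs
      set w : lp (fun _ : X => ℂ) 2 := ∑ x ∈ s, lp.single 2 x (l x) with hwdef
      have hwmem : w ∈ spanE X₁' := by
        refine Submodule.sum_mem _ (fun x hx => ?_)
        exact single_mem_spanE (by simpa [hs] using hx) _
      have hwapp : ∀ x, w x = if x ∈ s then l x else 0 := by
        intro x
        rw [hwdef, lp.coeFn_sum, Finset.sum_apply]
        by_cases hx : x ∈ s
        · rw [if_pos hx]
          have := Finset.sum_eq_single_of_mem (f := fun c => (lp.single 2 c (l c) :
              lp (fun _ : X => ℂ) 2) x) x hx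
            (fun b _ hb => by exact lp.single_apply_ne 2 b _ (Ne.symm hb))
          rw [this]
          exact lp.single_apply_self 2 x _
        · rw [if_neg hx]
          exact Finset.sum_eq_zero fun b hb => by
            exact lp.single_apply_ne 2 b _ (fun h => hx (h ▸ hb))
      have hmmem : (l - w : lp (fun _ : X => ℂ) 2) ∈ reduction L ∅ X₁' := by
        rw [hred]
        constructor
        · exact Submodule.sub_mem _ (Submodule.mem_sup_left hl) (Submodule.mem_sup_right hwmem)
        · apply mem_spanE_of_support
          intro x hx
          have hx1 : x ∈ X₁' := by simpa using hx
          have hxs : x ∈ s := by simpa [hs] using hx1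
          simp [lp.coeFn_sub, Pi.sub_apply, hwapp x, hxs]
      have hinner_m : ⟪(l - w : lp (fun _ : X => ℂ) 2), v⟫_ℂ = 0 :=
        hv1 _ hmmem
      have hinner_w : ⟪w, v⟫_ℂ = 0 := by
        apply inner_eq_zero_of_disjoint_support
        intro x
        by_cases hx : x ∈ s
        · right
          have hx1 : x ∈ X₁' := by simpa [hs] using hx
          exact spanE_apply_eq_zero hv0 (fun hx0 => hdisj.ne_of_mem hx0 (h1sub hx1) rfl)
        · left
          simp [hwapp x, hx]
      have hsplit : ⟪l, v⟫_ℂ = ⟪(l - w : lp (fun _ : X => ℂ) 2), v⟫_ℂ + ⟪w, v⟫_ℂ := by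
        rw [← inner_add_left]
        congr 1
        abel
      rw [hsplit, hinner_m, hinner_w, add_zero]
    have hm : v ∈ Lᗮ ⊓ spanE X₀ := ⟨hvL, hv0⟩
    rw [hreg₂] at hm
    exact hm

end
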